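/- (Krein-type resolvent formula for a finite-rank perturbation.) If the n×n matrix Γ(λ), with entries Γ(λ)_{ij} := ⟨f_i, R f_j⟩ − (𝐁⁻¹)_{ij}, is invertible, then H_B − λ·id is bijective and its inverse is the continuous linear map g ↦ R g − Σ_{i,j=1}^n (Γ(λ)⁻¹)_{ij} · ⟨f_j, R g⟩ · R f_i. -/

import Mathlib

open scoped Matrix


/-- Krein-type resolvent formula for a finite-rank perturbation
`H_B = T − Σ_{ij} B_{ij} |f_i⟩⟨f_j|`: if the matrix
`Γ(λ)_{ij} = ⟨f_i, R f_j⟩ − (B⁻¹)_{ij}` is invertible (where `R = (T − λ)⁻¹`), then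
`H_B − λ` is bijective with inverse `g ↦ R g − Σ_{ij} (Γ(λ)⁻¹)_{ij} ⟨f_j, R g⟩ R f_i`. -/
theorem krein_resolvent_formula
    {H : Type*} [NormedAddCommGroup H] [InnerProductSpace ℂ H] [CompleteSpace H]
    (T : H →L[ℂ] H) (lam : ℂ) (R : H →L[ℂ] H)
    (hR₁ : ∀ g : H, (T - lam • (1 : H →L[ℂ] H)) (R g) = g)
    (hR₂ : ∀ g : H, R ((T - lam • (1 : H →L[ℂ] H)) g) = g)
    (n : ℕ) (hn : 1 ≤ n) (f : Fin n → H)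
    (B : Matrix (Fin n) (Fin n) ℂ) (hB : IsUnit B.det)
    (Γ : Matrix (Fin n) (Fin n) ℂ)
    (hΓdef : ∀ i j : Fin n, Γ i j = (inner ℂ (f i) (R (f j)) : ℂ) - B⁻¹ i j)
    (hΓ : IsUnit Γ.det) :
    let HB : H →L[ℂ] H := T - ∑ i : Fin n, ∑ j : Fin n,
      B i j • ((innerSL ℂ (f j)).smulRight (f i))
    let K : H →L[ℂ] H := R - ∑ i : Fin n, ∑ j : Fin n,
      Γ⁻¹ i j • (((innerSL ℂ (f j)).comp R).smulRight (R (f i)))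
    Function.Bijective ⇑(HB - lam • (1 : H →L[ℂ] H)) ∧
    (∀ g : H, (HB - lam • (1 : H →L[ℂ] H)) (K g) = g) ∧
    (∀ g : H, K ((HB - lam • (1 : H →L[ℂ] H)) g) = g) := by
  intro HB K
  have hBi : B * B⁻¹ = 1 := Matrix.mul_nonsing_inv B hB
  have hBi' : B⁻¹ * B = 1 := Matrix.nonsing_inv_mul B hB
  have hΓi : Γ * Γ⁻¹ = 1 := Matrix.mul_nonsing_inv Γ hΓ
  have hΓi' : Γ⁻¹ * Γ = 1 := Matrix.nonsing_inv_mul Γ hΓ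
  set A : H →L[ℂ] H := T - lam • 1 with hAdef
  set P : H →L[ℂ] H := ∑ i : Fin n, ∑ j : Fin n,
      B i j • ((innerSL ℂ (f j)).smulRight (f i)) with hPdef
  have hHBsub : HB - lam • (1 : H →L[ℂ] H) = A - P := by
    simp only [HB, hAdef, hPdef]; abel
  have hAR : ∀ x : H, A (R x) = x := fun x => hR₁ x
  have hRA : ∀ x : H, R (A x) = x := fun x => hR₂ x
  have hGam : ∀ l i, (inner ℂ (f l) (R (f i)) : ℂ) = Γ l i + B⁻¹ l i := by
    intro l i; rw [hΓdef]; ring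
  have hM1 : B * (Γ + B⁻¹) * Γ⁻¹ = B + Γ⁻¹ := by
    rw [Matrix.mul_add, hBi, Matrix.add_mul, Matrix.one_mul, Matrix.mul_assoc, hΓi,
      Matrix.mul_one]
  have hM2 : Γ⁻¹ * (Γ + B⁻¹) * B = Γ⁻¹ + B := by
    rw [Matrix.mul_add, hΓi', Matrix.add_mul, Matrix.one_mul, Matrix.mul_assoc, hBi',
      Matrix.mul_one, add_comm]
  -- helper: collect double sums into mulVec form
  have hsum_smul : ∀ (M : Matrix (Fin n) (Fin n) ℂ) (v : Fin n → ℂ) (w : Fin n → H),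
      (∑ i : Fin n, ∑ j : Fin n, (M i j * v j) • w i) = ∑ i : Fin n, ((M *ᵥ v) i) • w i := by
    intro M v w
    refine Finset.sum_congr rfl fun i _ => ?_
    rw [← Finset.sum_smul]
    simp [Matrix.mulVec, dotProduct]
  have hPapp : ∀ x : H, P x = ∑ i : Fin n, ((B *ᵥ fun j => (inner ℂ (f j) x : ℂ)) i) • f i := by
    intro x
    rw [hPdef]
    simp only [ContinuousLinearMap.sum_apply, ContinuousLinearMap.smul_apply,
      ContinuousLinearMap.smulRight_apply, innerSL_apply_apply, smul_smul]
    exact hsum_smul B _ f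
  have hKapp : ∀ x : H, K x = R x - ∑ i : Fin n,
      ((Γ⁻¹ *ᵥ fun j => (inner ℂ (f j) (R x) : ℂ)) i) • R (f i) := by
    intro x
    simp only [K, ContinuousLinearMap.sub_apply, ContinuousLinearMap.sum_apply,
      ContinuousLinearMap.smul_apply, ContinuousLinearMap.smulRight_apply,
      ContinuousLinearMap.comp_apply, innerSL_apply_apply, smul_smul]
    rw [hsum_smul]
  -- inner products with sums of R (f i)
  have hinner_sum : ∀ (l : Fin n) (v : Fin n → ℂ),
      (inner ℂ (f l) (∑ i : Fin n, (v i) • R (f i)) : ℂ) = ((Γ + B⁻¹) *ᵥ v) l := by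
    intro l v
    rw [inner_sum]
    simp only [inner_smul_right, hGam]
    simp [Matrix.mulVec, dotProduct, Matrix.add_apply, mul_comm]
  have key1 : ∀ g : H, (HB - lam • (1 : H →L[ℂ] H)) (K g) = g := by
    intro g
    set c : Fin n → ℂ := fun j => (inner ℂ (f j) (R g) : ℂ) with hc
    rw [hHBsub, ContinuousLinearMap.sub_apply]
    have hA1 : A (K g) = g - ∑ i : Fin n, ((Γ⁻¹ *ᵥ c) i) • f i := by
      rw [hKapp, map_sub, hAR, map_sum]
      simp only [map_smul, hAR]
      rfl
    have hinnK : (fun l => (inner ℂ (f l) (K g) : ℂ)) = c - (Γ + B⁻¹) *ᵥ (Γ⁻¹ *ᵥ c) := by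
      funext l
      rw [hKapp, inner_sub_right, hinner_sum]
      rfl
    have hPK : P (K g) = -∑ i : Fin n, ((Γ⁻¹ *ᵥ c) i) • f i := by
      rw [hPapp, hinnK]
      have : B *ᵥ (c - (Γ + B⁻¹) *ᵥ (Γ⁻¹ *ᵥ c)) = -(Γ⁻¹ *ᵥ c) := by
        rw [Matrix.mulVec_sub, Matrix.mulVec_mulVec, Matrix.mulVec_mulVec, hM1,
          Matrix.add_mulVec]
        funext i; simp
      rw [this]
      simp [neg_smul]
    rw [hA1, hPK]
    abel
  have key2 : ∀ g : H, K ((HB - lam • (1 : H →L[ℂ] H)) g) = g := by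
    intro g
    set c : Fin n → ℂ := fun j => (inner ℂ (f j) g : ℂ) with hc
    rw [hHBsub]
    have hx : (A - P) g = A g - P g := rfl
    rw [hx]
    have hRh : R (A g - P g) = g - ∑ i : Fin n, ((B *ᵥ c) i) • R (f i) := by
      rw [map_sub, hRA, hPapp, map_sum]
      simp only [map_smul]
      rfl
    have hinnRh : (fun l => (inner ℂ (f l) (R (A g - P g)) : ℂ))
        = c - (Γ + B⁻¹) *ᵥ (B *ᵥ c) := by
      funext l
      rw [hRh, inner_sub_right, hinner_sum]
      rfl
    rw [hKapp, hinnRh, hRh]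
    have : Γ⁻¹ *ᵥ (c - (Γ + B⁻¹) *ᵥ (B *ᵥ c)) = -(B *ᵥ c) := by
      rw [Matrix.mulVec_sub, Matrix.mulVec_mulVec, Matrix.mulVec_mulVec, hM2,
        Matrix.add_mulVec]
      funext i; simp
    rw [this]
    simp only [Pi.neg_apply, neg_smul, Finset.sum_neg_distrib]
    abel
  refine ⟨⟨fun x y hxy => ?_, fun g => ⟨K g, key1 g⟩⟩, key1, key2⟩
  have := congrArg K hxy
  rwa [key2, key2] at this
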